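/- For any Dynkin quiver Q = (Δ,ξ), any i ∈ I and any l ∈ ℤ, the following identity holds in the root lattice: τ_Q^l(γ_i^Q) + τ_Q^{l+1}(γ_i^Q) = Σ_{j : d(i,j)=1} (−⟨h_j, α_i⟩)·τ_Q^{l+(ξ_j−ξ_i+1)/2}(γ_j^Q). -/

import Mathlib

noncomputable section

open scoped BigOperators

/-- A finite Cartan datum: a connected Dynkin diagram of finite type with vertex set `I`,
Cartan matrix `c`, symmetrizers `d`, simple roots `α`, fundamental weights `ϖ`, an invariant
symmetric bilinear form `form` (normalized so that `(α,α) = 2` for short roots, i.e. some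
`d i = 1`), simple reflections `s` acting on the weight lattice `V`, the set of positive
roots `Φ`, the longest element `w0` (with induced involution `star`), and Coxeter number
`hcox`. -/
structure SSDatum where
  I : Type
  [fintypeI : Fintype I]
  [decEqI : DecidableEq I]
  [nonemptyI : Nonempty I]
  V : Type
  [acgV : AddCommGroup V]
  [modV : Module ℚ V]
  [decEqV : DecidableEq V]
  c : I → I → ℤ
  d : I → ℤ
  α : I → V
  ϖ : I → V
  form : V → V → ℚ
  s : I → (V ≃ₗ[ℚ] V)
  Φ : Finset V
  w0 : V ≃ₗ[ℚ] V
  star : I → I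
  hcox : ℤ
  c_diag : ∀ i, c i i = 2
  c_nonpos : ∀ i j, i ≠ j → c i j ≤ 0
  c_zero_sym : ∀ i j, c i j = 0 → c j i = 0
  connected : ∀ i j, Relation.ReflTransGen (fun a b => a ≠ b ∧ c a b ≠ 0) i j
  d_pos : ∀ i, 0 < d i
  d_one : ∃ i, d i = 1
  d_symmetrize : ∀ i j, d i * c i j = d j * c j i
  exists_basis : ∃ b : Module.Basis I ℚ V, ∀ i, b i = ϖ i
  form_symm : ∀ x y, form x y = form y x
  form_add : ∀ x y z, form (x + y) z = form x z + form y z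
  form_smul : ∀ (a : ℚ) (x y), form (a • x) y = a * form x y
  form_alpha : ∀ i j, form (α i) (α j) = (d i : ℚ) * (c i j : ℚ)
  form_alpha_omega : ∀ i j, form (α i) (ϖ j) = if i = j then (d i : ℚ) else 0
  form_inv : ∀ i x y, form (s i x) (s i y) = form x y
  s_omega : ∀ i j, s i (ϖ j) = ϖ j - (if i = j then (1 : ℚ) else 0) • α i
  s_alpha : ∀ i j, s i (α j) = α j - ((c i j : ℚ)) • α i
  alpha_mem : ∀ i, α i ∈ Φ
  zero_not_mem : (0 : V) ∉ Φ
  pos_comb : ∀ β ∈ Φ, ∃ f : I → ℕ, β = ∑ i, (f i : ℚ) • α i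
  s_perm : ∀ i, ∀ β ∈ Φ, β ≠ α i → s i β ∈ Φ
  w0_mem : w0 ∈ Subgroup.closure (Set.range s)
  w0_alpha : ∀ i, w0 (α i) = - α (star i)
  star_invol : ∀ i, star (star i) = i
  w0_neg : ∀ β ∈ Φ, -(w0 β) ∈ Φ
  hcox_pos : 0 < hcox
  hcox_card : hcox * (Fintype.card I : ℤ) = 2 * (Φ.card : ℤ)

attribute [instance] SSDatum.fintypeI SSDatum.decEqI SSDatum.nonemptyI
attribute [instance] SSDatum.acgV SSDatum.modV SSDatum.decEqV

namespace SSDatum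

variable (D : SSDatum)

/-- The underlying graph of the Dynkin diagram. -/
def graph : SimpleGraph D.I where
  Adj a b := a ≠ b ∧ D.c a b ≠ 0
  symm := by
    refine ⟨?_⟩
    intro a b h
    exact ⟨h.1.symm, fun hz => h.2 (D.c_zero_sym b a hz)⟩
  loopless := by
    refine ⟨?_⟩
    intro a h
    exact h.1 rfl

/-- The graph distance `d(i,j)` in the Dynkin diagram. -/
def dist (i j : D.I) : ℕ := D.graph.dist i j

/-- The product `s_{i_1} ⋯ s_{i_r}` of simple reflections along a word. -/
def wordProd (l : List D.I) : D.V ≃ₗ[ℚ] D.V := (l.map D.s).prod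

/-- The length of an element of the Weyl group. -/
def len (w : D.V ≃ₗ[ℚ] D.V) : ℕ :=
  sInf {n | ∃ l : List D.I, l.length = n ∧ D.wordProd l = w}

/-- A word is a reduced expression of its product. -/
def IsReducedWord (l : List D.I) : Prop := l.length = D.len (D.wordProd l)

/-- The map `ŵ` on `Φ⁺ × ℤ`:
`ŵ(β,k) = (wβ, k)` if `wβ ∈ Φ⁺` and `ŵ(β,k) = (−wβ, k−1)` otherwise. -/
def hat (w : D.V ≃ₗ[ℚ] D.V) (x : D.V × ℤ) : D.V × ℤ :=
  if w x.1 ∈ D.Φ then (w x.1, x.2) else (-(w x.1), x.2 - 1)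

/-- The map `(ŵ)⁻¹` on `Φ⁺ × ℤ`. -/
def hatInv (w : D.V ≃ₗ[ℚ] D.V) (x : D.V × ℤ) : D.V × ℤ :=
  if w⁻¹ x.1 ∈ D.Φ then (w⁻¹ x.1, x.2) else (-(w⁻¹ x.1), x.2 + 1)

/-- `ξ` is a height function on the Dynkin diagram. -/
def IsHeight (ξ : D.I → ℤ) : Prop :=
  ∀ i j, D.dist i j = 1 → ξ i - ξ j = 1 ∨ ξ j - ξ i = 1

/-- `i` is a source of the Dynkin quiver `(Δ, ξ)`. -/
def IsSource (ξ : D.I → ℤ) (i : D.I) : Prop :=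
  ∀ j, D.dist i j = 1 → ξ j < ξ i

/-- The height function of the reflected quiver `s_i Q`. -/
def rHeight (ξ : D.I → ℤ) (i : D.I) : D.I → ℤ :=
  fun j => if j = i then ξ i - 2 else ξ j

/-- A sequence in `I` is adapted to the Dynkin quiver `(Δ, ξ)`. -/
def Adapted (ξ : D.I → ℤ) : List D.I → Prop
  | [] => True
  | i :: l => D.IsSource ξ i ∧ Adapted (D.rHeight ξ i) l

/-- `τ` is the Coxeter element `τ_Q` attached to the Dynkin quiver with height function `ξ`:
it has a `Q`-adapted reduced expression in which each simple reflection occurs exactly once. -/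
def IsCoxeterFor (ξ : D.I → ℤ) (τ : D.V ≃ₗ[ℚ] D.V) : Prop :=
  ∃ l : List D.I, l.Nodup ∧ (∀ i, i ∈ l) ∧ D.Adapted ξ l ∧ D.wordProd l = τ

/-- `γ_i^Q = (1 - τ_Q) ϖ_i`. -/
def gam (τ : D.V ≃ₗ[ℚ] D.V) (i : D.I) : D.V := D.ϖ i - τ (D.ϖ i)

/-- The map `φ_Q : Δ̂₀ → Φ⁺ × ℤ`, defined inductively from
`φ_Q(i, ξ_i) = (γ_i^Q, 0)` by applying `(τ̂_Q)^{∓1}` when moving `p ↦ p ± 2`. -/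
def phi (ξ : D.I → ℤ) (τ : D.V ≃ₗ[ℚ] D.V) (i : D.I) (p : ℤ) : D.V × ℤ :=
  if p ≤ ξ i then (D.hat τ)^[((ξ i - p) / 2).toNat] (D.gam τ i, 0)
  else (D.hatInv τ)^[((p - ξ i) / 2).toNat] (D.gam τ i, 0)

/-- The function `η_{i,j}^Q : ℤ → ℚ`. -/
def eta (ξ : D.I → ℤ) (τ : D.V ≃ₗ[ℚ] D.V) (i j : D.I) (u : ℤ) : ℚ :=
  if (u + ξ j - ξ i - 1) % 2 = 0 then
    D.form (D.ϖ i) ((τ ^ ((u + ξ j - ξ i - 1) / 2)) (D.gam τ j))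
  else 0

end SSDatum

/-- The variable `t` of the field of formal Laurent series `ℚ((t))`. -/
def tq : LaurentSeries ℚ := HahnSeries.single 1 1

namespace SSDatum

variable (D : SSDatum)

/-- The symmetrized `t`-quantized Cartan matrix `B(t) = C(t) · D⁻¹`, where
`C(t)_{i,i} = t + t⁻¹` and `C(t)_{i,j} = c_{i,j}` for `i ≠ j`. -/
def Bt : Matrix D.I D.I (LaurentSeries ℚ) :=
  Matrix.of fun i j =>
    (if i = j then tq + tq⁻¹ else (D.c i j : LaurentSeries ℚ)) * ((D.d j : LaurentSeries ℚ))⁻¹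

/-- `b̃_{i,j}(u)`: the coefficient of `t^u` in the Laurent expansion of `(B(t)⁻¹)_{i,j}`. -/
def btilde (i j : D.I) (u : ℤ) : ℚ := ((D.Bt)⁻¹ i j).coeff u

/-- `Ñ(i,p;j,s) = b̃_{i,j}(p−s−1) − b̃_{i,j}(s−p−1) − b̃_{i,j}(p−s+1) + b̃_{i,j}(s−p+1)`. -/
def Ncal (i : D.I) (p : ℤ) (j : D.I) (q : ℤ) : ℚ :=
  D.btilde i j (p - q - 1) - D.btilde i j (q - p - 1)
    - D.btilde i j (p - q + 1) + D.btilde i j (q - p + 1)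

end SSDatum

namespace SSDatum

variable (D : SSDatum)

lemma mul_apply' (f g : D.V ≃ₗ[ℚ] D.V) (x : D.V) : (f * g) x = f (g x) := rfl

lemma wordProd_nil : D.wordProd ([] : List D.I) = 1 := rfl

lemma wordProd_cons (i : D.I) (l : List D.I) :
    D.wordProd (i :: l) = D.s i * D.wordProd l := by
  simp [wordProd]

lemma wordProd_append (p q : List D.I) :
    D.wordProd (p ++ q) = D.wordProd p * D.wordProd q := by
  simp [wordProd]

lemma wordProd_omega_fix (l : List D.I) (j : D.I) (hj : j ∉ l) :
    D.wordProd l (D.ϖ j) = D.ϖ j := by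
  induction l with
  | nil => rfl
  | cons a l ih =>
    have haj : a ≠ j := fun h => hj (h ▸ List.mem_cons_self (a := a) (l := l))
    have hj' : j ∉ l := fun h => hj (List.mem_cons_of_mem a h)
    rw [wordProd_cons, mul_apply', ih hj', D.s_omega a j, if_neg haj, zero_smul, sub_zero]

lemma alpha_ne_zero (i : D.I) : D.α i ≠ 0 :=
  fun h => D.zero_not_mem (h ▸ D.alpha_mem i)

lemma alpha_eq_sum (i : D.I) : D.α i = ∑ j, (D.c j i : ℚ) • D.ϖ j := by
  obtain ⟨b, hb⟩ := D.exists_basis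
  have hrepr : D.α i = ∑ j, (b.repr (D.α i)) j • D.ϖ j := by
    conv_lhs => rw [← b.sum_repr (D.α i)]
    exact Finset.sum_congr rfl fun j _ => by rw [hb]
  have key : ∀ j, (b.repr (D.α i)) j = (D.c j i : ℚ) := by
    intro j
    have h1 := D.s_alpha j i
    have h2 : D.s j (D.α i) = D.α i - (b.repr (D.α i)) j • D.α j := by
      conv_lhs => rw [hrepr, map_sum]
      have hterm : ∀ k ∈ Finset.univ, D.s j ((b.repr (D.α i)) k • D.ϖ k)
          = (b.repr (D.α i)) k • D.ϖ k
            - (if j = k then (b.repr (D.α i)) k else 0) • D.α j := by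
        intro k _
        rw [map_smul, D.s_omega j k, smul_sub, smul_smul]
        congr 2
        by_cases h : j = k <;> simp [h]
      rw [Finset.sum_congr rfl hterm, Finset.sum_sub_distrib, ← hrepr]
      congr 1
      rw [← Finset.sum_smul, Finset.sum_ite_eq, if_pos (Finset.mem_univ j)]
    have h3 : ((b.repr (D.α i)) j - (D.c j i : ℚ)) • D.α j = 0 := by
      have := h1.symm.trans h2
      rw [sub_smul]
      rw [sub_right_inj.mp this, sub_self]
    rcases smul_eq_zero.mp h3 with h | h
    · linarith [sub_eq_zero.mp h]
    · exact absurd h (D.alpha_ne_zero j)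
  rw [hrepr]
  exact Finset.sum_congr rfl fun j _ => by rw [key j]

lemma tau_omega_of_split (l p q : List D.I) (hnd : l.Nodup) (j : D.I)
    (hl : l = p ++ j :: q) :
    D.wordProd l (D.ϖ j) = D.ϖ j - D.wordProd p (D.α j) := by
  subst hl
  have hjp : j ∉ p := by
    intro h
    exact (List.disjoint_of_nodup_append hnd) h (List.mem_cons_self (a := j) (l := q))
  have hjq : j ∉ q := by
    have := (List.nodup_append.mp hnd).2.1
    exact (List.nodup_cons.mp this).1
  rw [wordProd_append, mul_apply', wordProd_cons, mul_apply',
    D.wordProd_omega_fix q j hjq, D.s_omega j j, if_pos rfl, one_smul, map_sub,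
    D.wordProd_omega_fix p j hjp]

lemma gam_eq_wordProd (l p q : List D.I) (hnd : l.Nodup) (j : D.I)
    (hl : l = p ++ j :: q) (τ : D.V ≃ₗ[ℚ] D.V) (hτ : D.wordProd l = τ) :
    D.gam τ j = D.wordProd p (D.α j) := by
  rw [gam, ← hτ, D.tau_omega_of_split l p q hnd j hl]
  abel

lemma wordProd_prefix_omega (l p q : List D.I) (hnd : l.Nodup) (i j : D.I)
    (hl : l = p ++ i :: q) (hjp : j ∈ p) (τ : D.V ≃ₗ[ℚ] D.V)
    (hτ : D.wordProd l = τ) :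
    D.wordProd p (D.ϖ j) = τ (D.ϖ j) := by
  obtain ⟨p₁, p₂, hp⟩ := List.append_of_mem hjp
  have hndp : p.Nodup := by
    subst hl
    exact (List.nodup_append.mp hnd).1
  have hl' : l = p₁ ++ j :: (p₂ ++ i :: q) := by
    rw [hl, hp]; simp
  rw [D.tau_omega_of_split p p₁ p₂ hndp j hp, ← hτ,
    D.tau_omega_of_split l p₁ (p₂ ++ i :: q) hnd j hl']

lemma adapted_isSource (ξ : D.I → ℤ) (l : List D.I) (hl : D.Adapted ξ l)
    (hnd : l.Nodup) (p q : List D.I) (j : D.I) (hsp : l = p ++ j :: q) :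
    D.IsSource (fun k => if k ∈ p then ξ k - 2 else ξ k) j := by
  induction p generalizing ξ l with
  | nil =>
    subst hsp
    obtain ⟨hs, -⟩ := hl
    intro k hk
    simpa using hs k hk
  | cons a p ih =>
    subst hsp
    obtain ⟨-, hl2⟩ := hl
    have hnd' := List.nodup_cons.mp hnd
    have ha : a ∉ p ++ j :: q := hnd'.1
    have hres := ih (D.rHeight ξ a) (p ++ j :: q) hl2 hnd'.2 rfl
    intro k hk
    have hres' := hres k hk
    have heq : ∀ m : D.I, (if m ∈ p then D.rHeight ξ a m - 2 else D.rHeight ξ a m)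
        = (if m ∈ a :: p then ξ m - 2 else ξ m) := by
      intro m
      by_cases hm : m ∈ p
      · have hma : m ≠ a := fun h => ha (h ▸ List.mem_append.mpr (Or.inl hm))
        simp [rHeight, hm, hma, List.mem_cons]
      · by_cases hma : m = a
        · subst hma
          simp [rHeight, hm]
        · simp [rHeight, hm, hma, List.mem_cons]
    simpa only [heq] using hres'

lemma not_mem_of_split {l p q : List D.I} {i : D.I} (hnd : l.Nodup)
    (hl : l = p ++ i :: q) : i ∉ p := by
  subst hl
  intro h
  exact (List.disjoint_of_nodup_append hnd) h (List.mem_cons_self (a := i) (l := q))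

lemma height_order (ξ : D.I → ℤ) (hξ : D.IsHeight ξ) (l : List D.I)
    (hnd : l.Nodup) (hall : ∀ k, k ∈ l) (had : D.Adapted ξ l)
    (p q : List D.I) (i j : D.I) (hl : l = p ++ i :: q)
    (hadj : D.dist i j = 1) : (j ∈ p ↔ ξ j = ξ i + 1) := by
  have hip : i ∉ p := D.not_mem_of_split hnd hl
  have hne : j ≠ i := by
    intro h
    subst h
    rw [dist, SimpleGraph.dist_self] at hadj
    omega
  constructor
  · intro hjp
    obtain ⟨p₁, p₂, hp⟩ := List.append_of_mem hjp
    have hl' : l = p₁ ++ j :: (p₂ ++ i :: q) := by rw [hl, hp]; simp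
    have hs := D.adapted_isSource ξ l had hnd p₁ (p₂ ++ i :: q) j hl'
    have hadj' : D.dist j i = 1 := by
      rw [dist, SimpleGraph.dist_comm]; exact hadj
    have h1 := hs i hadj'
    have hip1 : i ∉ p₁ := by
      intro h
      exact (List.disjoint_of_nodup_append (hl' ▸ hnd)) h
        (List.mem_cons_of_mem j (List.mem_append.mpr (Or.inr (List.mem_cons_self (a := i) (l := q)))))
    have hjp1 : j ∉ p₁ := D.not_mem_of_split hnd hl'
    simp only [hip1, hjp1, if_false] at h1
    rcases hξ i j hadj with h | h <;> omega
  · intro hx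
    by_contra hjp
    have hs := D.adapted_isSource ξ l had hnd p q i hl
    have h1 := hs j hadj
    simp only [hjp, hip, if_false] at h1
    omega

lemma gam_expand (ξ : D.I → ℤ) (hξ : D.IsHeight ξ) (τ : D.V ≃ₗ[ℚ] D.V)
    (hτ : D.IsCoxeterFor ξ τ) (i : D.I) :
    D.gam τ i = (2 : ℚ) • D.ϖ i +
      ∑ j ∈ Finset.univ.filter (fun j => D.dist i j = 1),
        (D.c j i : ℚ) • (if ξ j = ξ i + 1 then τ (D.ϖ j) else D.ϖ j) := by
  obtain ⟨l, hnd, hall, had, hτl⟩ := hτ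
  obtain ⟨p, q, hl⟩ := List.append_of_mem (hall i)
  have hip : i ∉ p := D.not_mem_of_split hnd hl
  have hgam : D.gam τ i = D.wordProd p (D.α i) :=
    D.gam_eq_wordProd l p q hnd i hl τ hτl
  rw [hgam, D.alpha_eq_sum i, map_sum]
  have hterm : ∀ j ∈ Finset.univ, D.wordProd p ((D.c j i : ℚ) • D.ϖ j)
      = (D.c j i : ℚ) • D.wordProd p (D.ϖ j) := fun j _ => map_smul _ _ _
  rw [Finset.sum_congr rfl hterm]
  rw [← Finset.add_sum_erase _ _ (Finset.mem_univ i)]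
  congr 1
  · rw [D.wordProd_omega_fix p i hip, D.c_diag i]
    norm_num
  · have hsub : Finset.univ.filter (fun j => D.dist i j = 1) ⊆ Finset.univ.erase i := by
      intro j hj
      rw [Finset.mem_filter] at hj
      rw [Finset.mem_erase]
      refine ⟨?_, Finset.mem_univ j⟩
      intro h
      subst h
      rw [dist, SimpleGraph.dist_self] at hj
      omega
    rw [← Finset.sum_subset hsub]
    · refine Finset.sum_congr rfl fun j hj => ?_
      rw [Finset.mem_filter] at hj
      have hiff := D.height_order ξ hξ l hnd hall had p q i j hl hj.2
      by_cases hjp : j ∈ p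
      · rw [if_pos (hiff.mp hjp), D.wordProd_prefix_omega l p q hnd i j hl hjp τ hτl]
      · rw [if_neg (fun h => hjp (hiff.mpr h)), D.wordProd_omega_fix p j hjp]
    · intro j hj hj2
      rw [Finset.mem_erase] at hj
      rw [Finset.mem_filter, not_and] at hj2
      have hnadj := hj2 (Finset.mem_univ j)
      have hc : D.c i j = 0 := by
        by_contra hc
        exact hnadj ((SimpleGraph.dist_eq_one_iff_adj).mpr ⟨fun h => hj.1 h.symm, hc⟩)
      have : D.c j i = 0 := D.c_zero_sym i j hc
      rw [this]
      norm_num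

lemma stmt9_zero (ξ : D.I → ℤ) (hξ : D.IsHeight ξ) (τ : D.V ≃ₗ[ℚ] D.V)
    (hτ : D.IsCoxeterFor ξ τ) (i : D.I) :
    D.gam τ i + τ (D.gam τ i) =
      ∑ j ∈ Finset.univ.filter (fun j => D.dist i j = 1),
        (-(D.c j i)) • (if ξ j = ξ i + 1 then τ (D.gam τ j) else D.gam τ j) := by
  have hstar := D.gam_expand ξ hξ τ hτ i
  set F := Finset.univ.filter (fun j => D.dist i j = 1) with hF
  set w : D.I → D.V := fun j => if ξ j = ξ i + 1 then τ (D.ϖ j) else D.ϖ j with hw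
  have hterm : ∀ j ∈ F, (-(D.c j i)) • (if ξ j = ξ i + 1 then τ (D.gam τ j) else D.gam τ j)
      = (-(D.c j i : ℚ)) • (w j - τ (w j)) := by
    intro j _
    have h1 : (if ξ j = ξ i + 1 then τ (D.gam τ j) else D.gam τ j) = w j - τ (w j) := by
      by_cases h : ξ j = ξ i + 1
      · rw [if_pos h, hw]
        simp only [if_pos h]
        rw [gam, map_sub]
      · rw [if_neg h, hw]
        simp only [if_neg h]
        rw [gam]
    rw [h1, ← Int.cast_smul_eq_zsmul ℚ]
    push_cast
    ring_nf
  rw [Finset.sum_congr rfl hterm]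
  have hsum : ∑ j ∈ F, (-(D.c j i : ℚ)) • (w j - τ (w j))
      = τ (∑ j ∈ F, (D.c j i : ℚ) • w j) - ∑ j ∈ F, (D.c j i : ℚ) • w j := by
    rw [map_sum, ← Finset.sum_sub_distrib]
    refine Finset.sum_congr rfl fun j _ => ?_
    rw [map_smul]
    module
  rw [hsum]
  have hS : ∑ j ∈ F, (D.c j i : ℚ) • w j = D.gam τ i - (2 : ℚ) • D.ϖ i := by
    rw [hstar]; abel
  rw [hS]
  simp only [gam, map_sub, map_smul]
  module

end SSDatum

/-- (`Δ̂`-additive property) For any Dynkin quiver `Q = (Δ,ξ)`, any `i ∈ I`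
and any `l ∈ ℤ`:
`τ_Q^l(γ_i^Q) + τ_Q^{l+1}(γ_i^Q) = Σ_{j : d(i,j)=1} (−⟨h_j, α_i⟩)·τ_Q^{l+(ξ_j−ξ_i+1)/2}(γ_j^Q)`. -/
theorem stmt9 (D : SSDatum) (ξ : D.I → ℤ) (hξ : D.IsHeight ξ)
    (τ : D.V ≃ₗ[ℚ] D.V) (hτ : D.IsCoxeterFor ξ τ)
    (i : D.I) (l : ℤ) :
    (τ ^ l) (D.gam τ i) + (τ ^ (l + 1)) (D.gam τ i) =
      ∑ j ∈ Finset.univ.filter (fun j => D.dist i j = 1),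
        (-(D.c j i)) • (τ ^ (l + (ξ j - ξ i + 1) / 2)) (D.gam τ j) := by
  have h0 := D.stmt9_zero ξ hξ τ hτ i
  have hl1 : ∀ x : D.V, (τ ^ (l + 1)) x = (τ ^ l) (τ x) := by
    intro x
    rw [zpow_add_one]
    rfl
  calc (τ ^ l) (D.gam τ i) + (τ ^ (l + 1)) (D.gam τ i)
      = (τ ^ l) (D.gam τ i + τ (D.gam τ i)) := by rw [map_add, hl1]
    _ = (τ ^ l) (∑ j ∈ Finset.univ.filter (fun j => D.dist i j = 1),
          (-(D.c j i)) • (if ξ j = ξ i + 1 then τ (D.gam τ j) else D.gam τ j)) := by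
        rw [h0]
    _ = ∑ j ∈ Finset.univ.filter (fun j => D.dist i j = 1),
          (-(D.c j i)) • (τ ^ (l + (ξ j - ξ i + 1) / 2)) (D.gam τ j) := by
        rw [map_sum]
        refine Finset.sum_congr rfl fun j hj => ?_
        rw [Finset.mem_filter] at hj
        rw [map_zsmul]
        congr 1
        have hd := hξ i j hj.2
        by_cases h : ξ j = ξ i + 1
        · have he : l + (ξ j - ξ i + 1) / 2 = l + 1 := by omega
          rw [if_pos h, he, hl1]
        · have hjm : ξ j = ξ i - 1 := by omega
          have he : l + (ξ j - ξ i + 1) / 2 = l := by omega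
          rw [if_neg h, he]
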